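/- For all integers n ≥ 1 and 0 ≤ k ≤ n, the number of subsets {a_1 < a_2 < … < a_k} ⊆ {1,…,n} of size k with a_1 + a_2 + … + a_k ≡ 1 (mod n) equals (1/n)·Σ_{d | gcd(n,k)} μ(d)·(−1)^{k + k/d}·C(n/d, k/d). -/

import Mathlib

open Finset Polynomial

-- orthogonality: sum of m-th powers over all n-th roots of unity
lemma aux_sum_nthRoots (n m : ℕ) (hn : n ≠ 0) :
    ∑ z ∈ nthRootsFinset n (1 : ℂ), z ^ m = if n ∣ m then (n : ℂ) else 0 := by
  have hn' : 0 < n := Nat.pos_of_ne_zero hn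
  obtain ⟨ζ, hζ⟩ : ∃ ζ : ℂ, IsPrimitiveRoot ζ n := ⟨_, Complex.isPrimitiveRoot_exp n hn⟩
  by_cases h : n ∣ m
  · rw [if_pos h]
    have h1 : ∀ z ∈ nthRootsFinset n (1 : ℂ), z ^ m = 1 := by
      intro z hz
      obtain ⟨c, rfl⟩ := h
      rw [pow_mul, (mem_nthRootsFinset hn' 1).1 hz, one_pow]
    rw [Finset.sum_congr rfl h1, Finset.sum_const, hζ.card_nthRootsFinset, nsmul_eq_mul, mul_one]
  · rw [if_neg h]
    have hζ0 : ζ ≠ 0 := hζ.ne_zero hn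
    have hζm : ζ ^ m ≠ 1 := fun hh => h ((hζ.pow_eq_one_iff_dvd m).1 hh)
    have key : ζ ^ m * ∑ z ∈ nthRootsFinset n (1 : ℂ), z ^ m = ∑ z ∈ nthRootsFinset n (1 : ℂ), z ^ m := by
      rw [Finset.mul_sum]
      refine Finset.sum_bij' (fun z _ => ζ * z) (fun z _ => ζ⁻¹ * z) ?_ ?_ ?_ ?_ ?_
      · intro a ha
        rw [← mul_one (1 : ℂ)]
        exact mul_mem_nthRootsFinset (hζ.mem_nthRootsFinset hn') ha
      · intro a ha
        rw [← mul_one (1 : ℂ)]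
        refine mul_mem_nthRootsFinset ?_ ha
        exact (hζ.inv).mem_nthRootsFinset hn'
      · intro a _
        show ζ⁻¹ * (ζ * a) = a
        field_simp
      · intro a _
        show ζ * (ζ⁻¹ * a) = a
        field_simp
      · intro a _
        rw [mul_pow, mul_comm]
    have h2 : (ζ ^ m - 1) * ∑ z ∈ nthRootsFinset n (1 : ℂ), z ^ m = 0 := by
      rw [sub_mul, one_mul, key, sub_self]
    rcases mul_eq_zero.1 h2 with h3 | h3
    · exact absurd (sub_eq_zero.1 h3) hζm
    · exact h3

-- sum of primitive e-th roots of unity equals μ(e)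
lemma aux_sum_prim (e : ℕ) (he : 0 < e) :
    ∑ z ∈ primitiveRoots e ℂ, z = ((ArithmeticFunction.moebius e : ℤ) : ℂ) := by
  have key : ∀ N : ℕ, N > 0 →
      ∑ d ∈ N.divisors, (∑ z ∈ primitiveRoots d ℂ, z) = (if N = 1 then 1 else 0 : ℂ) := by
    intro N hN
    obtain ⟨ζ, hζ⟩ : ∃ ζ : ℂ, IsPrimitiveRoot ζ N := ⟨_, Complex.isPrimitiveRoot_exp N hN.ne'⟩
    rw [← Finset.sum_biUnion]
    · rw [← IsPrimitiveRoot.nthRoots_one_eq_biUnion_primitiveRoots (n := N)]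
      have := aux_sum_nthRoots N 1 hN.ne'
      simp only [pow_one] at this
      rw [this]
      rcases eq_or_ne N 1 with h | h
      · simp [h]
      · simp [h, Nat.dvd_one]
    · intro i _ j _ hij
      exact IsPrimitiveRoot.disjoint hij
  have := (ArithmeticFunction.sum_eq_iff_sum_mul_moebius_eq
      (f := fun d => ∑ z ∈ primitiveRoots d ℂ, z)
      (g := fun N => if N = 1 then 1 else 0)).mp key e he
  rw [← this]
  rw [Finset.sum_eq_single_of_mem (e, 1)]
  · simp
  · simp [Nat.mem_divisorsAntidiagonal, he.ne']
  · rintro ⟨a, b⟩ hab hne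
    have hmem := (Nat.mem_divisorsAntidiagonal).1 hab
    have hb : b ≠ 1 := by
      intro hb
      apply hne
      simp only [hb, mul_one] at hmem
      simp [hb, hmem.1]
    simp [hb]

-- ∏ over all e-th roots of (X + C z) = X^e - C((-1)^e)
lemma aux_prod_period {e : ℕ} (he : 0 < e) {ζ : ℂ} (hζ : IsPrimitiveRoot ζ e) :
    ∏ z ∈ nthRootsFinset e (1 : ℂ), (X + C z) = X ^ e - C ((-1 : ℂ) ^ e) := by
  have h1 : (X : ℂ[X]) ^ e - 1 = ∏ z ∈ nthRootsFinset e (1 : ℂ), (X - C z) :=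
    X_pow_sub_one_eq_prod he hζ
  have h2 := congrArg (Polynomial.aeval (-X : ℂ[X])) h1
  simp only [map_sub, map_pow, map_one, map_prod, aeval_X, aeval_C, algebraMap_eq] at h2
  have hcard : #(nthRootsFinset e (1 : ℂ)) = e := hζ.card_nthRootsFinset
  have h3 : ∏ z ∈ nthRootsFinset e (1 : ℂ), (X + C z)
      = (-1 : ℂ[X]) ^ e * ∏ z ∈ nthRootsFinset e (1 : ℂ), (-X - C z) := by
    rw [show ∏ z ∈ nthRootsFinset e (1 : ℂ), (X + C z)
        = ∏ z ∈ nthRootsFinset e (1 : ℂ), ((-1) * (-X - C z)) from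
      Finset.prod_congr rfl fun z _ => by ring]
    rw [Finset.prod_mul_distrib, Finset.prod_const, hcard]
  rw [h3, ← h2]
  have h4 : ((-1 : ℂ[X])) ^ e * ((-1 : ℂ[X])) ^ e = 1 := by
    rw [← mul_pow]; norm_num
  have h5 : C ((-1 : ℂ) ^ e) = ((-1 : ℂ[X])) ^ e := by
    rw [map_pow, map_neg, map_one]
  rw [h5, neg_pow (X : ℂ[X]) e]
  linear_combination (X : ℂ[X]) ^ e * h4

-- shifting the product over one period
lemma aux_prod_range_shift {e : ℕ} (he : 0 < e) {ζ : ℂ} (hone : ζ ^ e = 1) :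
    ∏ i ∈ range e, (X + C (ζ ^ (1 + i))) = ∏ i ∈ range e, (X + C (ζ ^ i)) := by
  obtain ⟨e', rfl⟩ := Nat.exists_eq_succ_of_ne_zero he.ne'
  rw [Finset.prod_range_succ, Finset.prod_range_succ']
  congr 1
  · exact Finset.prod_congr rfl fun i _ => by rw [Nat.add_comm 1 i]
  · rw [Nat.add_comm 1 e', hone, pow_zero]

-- product over range (e*m) is a power
lemma aux_prod_range_mul {e : ℕ} {ζ : ℂ} (hone : ζ ^ e = 1) (m : ℕ) :
    ∏ i ∈ range (e * m), (X + C (ζ ^ (1 + i)))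
      = (∏ i ∈ range e, (X + C (ζ ^ (1 + i)))) ^ m := by
  induction m with
  | zero => simp
  | succ m ih =>
    rw [Nat.mul_succ, Finset.prod_range_add, ih, pow_succ]
    congr 1
    refine Finset.prod_congr rfl fun i _ => ?_
    rw [show 1 + (e * m + i) = e * m + (1 + i) by ring, pow_add, pow_mul, hone, one_pow, one_mul]

-- range-e product equals product over all e-th roots
lemma aux_prod_range_eq_roots {e : ℕ} (he : 0 < e) {ζ : ℂ} (hζ : IsPrimitiveRoot ζ e) :
    ∏ i ∈ range e, (X + C (ζ ^ i)) = ∏ z ∈ nthRootsFinset e (1 : ℂ), (X + C z) := by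
  have himg : (range e).image (ζ ^ ·) = nthRootsFinset e (1 : ℂ) := by
    apply Finset.eq_of_subset_of_card_le
    · intro z hz
      simp only [Finset.mem_image, Finset.mem_range] at hz
      obtain ⟨i, _, rfl⟩ := hz
      exact (mem_nthRootsFinset he 1).2 (by rw [← pow_mul, mul_comm, pow_mul, hζ.pow_eq_one, one_pow])
    · rw [hζ.card_nthRootsFinset, Finset.card_image_of_injOn hζ.injOn_pow, Finset.card_range]
  rw [← himg, Finset.prod_image]
  intro i hi j hj hij
  exact hζ.injOn_pow (by simpa using hi) (by simpa using hj) hij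

-- full product over Icc 1 n
lemma aux_prod_Icc {n e : ℕ} (hn : 0 < n) (he : e ∣ n) {ζ : ℂ} (hζ : IsPrimitiveRoot ζ e) :
    ∏ i ∈ Icc 1 n, (X + C (ζ ^ i)) = (X ^ e - C ((-1 : ℂ) ^ e)) ^ (n / e) := by
  have he0 : 0 < e := Nat.pos_of_dvd_of_pos he hn
  have h1 : ∏ i ∈ Icc 1 n, (X + C (ζ ^ i)) = ∏ i ∈ range n, (X + C (ζ ^ (1 + i))) := by
    rw [← Finset.Ico_add_one_right_eq_Icc, Finset.prod_Ico_eq_prod_range]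
    simp
  obtain ⟨m, rfl⟩ := he
  rw [h1, aux_prod_range_mul hζ.pow_eq_one, aux_prod_range_shift he0 hζ.pow_eq_one,
    aux_prod_range_eq_roots he0 hζ, aux_prod_period he0 hζ, Nat.mul_div_cancel_left m he0]

-- coefficient of (X^e - C c)^m
lemma aux_coeff_pow (e m t : ℕ) (he : 0 < e) (c : ℂ) :
    ((X ^ e - C c) ^ m).coeff t =
      if e ∣ t ∧ t ≤ e * m then (-1 : ℂ) ^ (t / e + m) * c ^ (m - t / e) * (m.choose (t / e))
      else 0 := by
  rw [sub_pow, Polynomial.finset_sum_coeff]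
  have hterm : ∀ i, ((-1 : ℂ[X]) ^ (i + m) * (X ^ e) ^ i * C c ^ (m - i) * (m.choose i : ℂ[X])).coeff t
      = if e * i = t then (-1 : ℂ) ^ (i + m) * c ^ (m - i) * (m.choose i) else 0 := by
    intro i
    have hC : ((-1 : ℂ[X]) ^ (i + m) * (X ^ e) ^ i * C c ^ (m - i) * (m.choose i : ℂ[X]))
        = C ((-1 : ℂ) ^ (i + m) * c ^ (m - i) * (m.choose i : ℂ)) * X ^ (e * i) := by
      rw [← pow_mul, ← Polynomial.C_eq_natCast, map_mul, map_mul, map_pow, map_pow, map_neg, map_one]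
      ring
    rw [hC, Polynomial.coeff_C_mul, Polynomial.coeff_X_pow]
    by_cases h : t = e * i
    · rw [if_pos h, if_pos h.symm, mul_one]
    · rw [if_neg h, if_neg (fun hh => h hh.symm), mul_zero]
  rw [Finset.sum_congr rfl (fun i _ => hterm i)]
  by_cases h : e ∣ t ∧ t ≤ e * m
  · obtain ⟨⟨j, rfl⟩, hle⟩ := h
    have hj : j ≤ m := Nat.le_of_mul_le_mul_left hle he
    have hje : e * j / e = j := Nat.mul_div_cancel_left j he
    rw [Finset.sum_eq_single j]
    · rw [if_pos rfl, if_pos ⟨⟨j, rfl⟩, hle⟩, hje]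
    · intro i _ hne
      rw [if_neg (fun hh => hne (Nat.eq_of_mul_eq_mul_left he hh))]
    · intro habs
      exact absurd (Finset.mem_range.2 (Nat.lt_succ_of_le hj)) habs
  · rw [if_neg h, Finset.sum_eq_zero]
    intro i hi
    rw [if_neg]
    intro hh
    apply h
    exact ⟨⟨i, hh.symm⟩, by rw [← hh]; exact Nat.mul_le_mul_left e (Nat.lt_succ_iff.1 (Finset.mem_range.1 hi))⟩


-- the elementary symmetric evaluation
lemma aux_esymm (n k e : ℕ) (hn : 0 < n) (hk : k ≤ n) (he : e ∣ n) {ζ : ℂ}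
    (hζ : IsPrimitiveRoot ζ e) :
    ∑ S ∈ (Icc 1 n).powersetCard k, ζ ^ (∑ a ∈ S, a) =
      if e ∣ k then (-1 : ℂ) ^ (k + k / e) * ((n / e).choose (k / e)) else 0 := by
  have he0 : 0 < e := Nat.pos_of_dvd_of_pos he hn
  have hcard : #(Icc 1 n) = n := by simp
  have hv := Finset.prod_X_add_C_coeff (Icc 1 n) (fun i => (ζ : ℂ) ^ i)
      (k := n - k) (by rw [hcard]; omega)
  rw [hcard, Nat.sub_sub_self hk] at hv
  have hsum : ∑ S ∈ (Icc 1 n).powersetCard k, ζ ^ (∑ a ∈ S, a)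
      = ∑ S ∈ (Icc 1 n).powersetCard k, ∏ a ∈ S, ζ ^ a :=
    Finset.sum_congr rfl fun S _ => (Finset.prod_pow_eq_pow_sum S _ ζ).symm
  rw [hsum, ← hv, aux_prod_Icc hn he hζ, aux_coeff_pow e (n / e) (n - k) he0]
  have hem : e * (n / e) = n := Nat.mul_div_cancel' he
  by_cases hek : e ∣ k
  · have h1 : e ∣ n - k := Nat.dvd_sub he hek
    have h2 : n - k ≤ e * (n / e) := by rw [hem]; omega
    rw [if_pos ⟨h1, h2⟩, if_pos hek]
    obtain ⟨a, rfl⟩ := he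
    obtain ⟨b, rfl⟩ := hek
    have hb : b ≤ a := Nat.le_of_mul_le_mul_left hk he0
    have hda : e * a / e = a := Nat.mul_div_cancel_left a he0
    have hdb : e * b / e = b := Nat.mul_div_cancel_left b he0
    have hdab : (e * a - e * b) / e = a - b := by
      rw [← Nat.mul_sub, Nat.mul_div_cancel_left _ he0]
    rw [hda, hdb, hdab, Nat.sub_sub_self hb, ← pow_mul, Nat.choose_symm hb,
      ← pow_add, neg_one_pow_eq_pow_mod_two, neg_one_pow_eq_pow_mod_two (n := e * b + b)]
    congr 2
    generalize e * b = c
    omega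
  · rw [if_neg hek, if_neg]
    rintro ⟨h1, -⟩
    exact hek (by
      have : e ∣ n - (n - k) := Nat.dvd_sub he h1
      rwa [Nat.sub_sub_self hk] at this)

-- sum of z^(e-1) over primitive e-th roots
lemma aux_sum_prim_pred (e : ℕ) (he : 0 < e) :
    ∑ z ∈ primitiveRoots e ℂ, z ^ (e - 1) = ((ArithmeticFunction.moebius e : ℤ) : ℂ) := by
  rw [← aux_sum_prim e he]
  refine Finset.sum_bij' (fun z _ => z⁻¹) (fun z _ => z⁻¹) ?_ ?_ ?_ ?_ ?_
  · intro z hz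
    exact (mem_primitiveRoots he).2 ((isPrimitiveRoot_of_mem_primitiveRoots hz).inv)
  · intro z hz
    exact (mem_primitiveRoots he).2 ((isPrimitiveRoot_of_mem_primitiveRoots hz).inv)
  · intro z _; exact inv_inv z
  · intro z _; exact inv_inv z
  · intro z hz
    have hzp := isPrimitiveRoot_of_mem_primitiveRoots hz
    have h1 : z ^ (e - 1) * z = 1 := by
      rw [← pow_succ, Nat.sub_add_cancel he, hzp.pow_eq_one]
    exact eq_inv_of_mul_eq_one_left h1

-- modular condition
lemma aux_mod_iff (a n : ℕ) (hn : 0 < n) : a % n = 1 % n ↔ n ∣ (a + (n - 1)) := by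
  have h1 : 1 + (n - 1) = n := by omega
  constructor
  · intro h
    have h2 : a + (n - 1) ≡ 1 + (n - 1) [MOD n] := Nat.ModEq.add_right _ h
    rw [h1] at h2
    have h3 : (n : ℕ) ≡ 0 [MOD n] := (Nat.modEq_zero_iff_dvd).2 dvd_rfl
    exact (Nat.modEq_zero_iff_dvd).1 (h2.trans h3)
  · intro h
    have h2 : a + (n - 1) ≡ 0 [MOD n] := (Nat.modEq_zero_iff_dvd).2 h
    have h3 : (0 : ℕ) ≡ 1 + (n - 1) [MOD n] := by
      rw [h1]
      exact ((Nat.modEq_zero_iff_dvd).2 dvd_rfl).symm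
    exact Nat.ModEq.add_right_cancel' (n - 1) (h2.trans h3)

/-- The number of `k`-subsets `{a_1 < … < a_k}` of `{1,…,n}` with
`a_1 + … + a_k ≡ 1 (mod n)` equals `(1/n) Σ_{d | gcd(n,k)} μ(d)(−1)^{k+k/d} C(n/d, k/d)`. -/
theorem stmt14 (n k : ℕ) (hn : 1 ≤ n) (hk : k ≤ n) :
    ((((Finset.Icc 1 n).powersetCard k).filter
        (fun S => (∑ a ∈ S, a) % n = 1 % n)).card : ℚ) =
      (1 / (n : ℚ)) * ∑ d ∈ (Nat.gcd n k).divisors,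
        ((ArithmeticFunction.moebius d : ℤ) : ℚ) * (-1) ^ (k + k / d) *
          ((n / d).choose (k / d) : ℚ) := by
  have hn0 : n ≠ 0 := by omega
  have npos : 0 < n := hn
  obtain ⟨ζ₀, hζ₀⟩ : ∃ ζ : ℂ, IsPrimitiveRoot ζ n := ⟨_, Complex.isPrimitiveRoot_exp n hn0⟩
  set A := (Finset.Icc 1 n).powersetCard k with hA
  set N := (A.filter (fun S => (∑ a ∈ S, a) % n = 1 % n)).card with hNdef
  have main : (n : ℂ) * N = ∑ d ∈ (Nat.gcd n k).divisors,
      ((ArithmeticFunction.moebius d : ℤ) : ℂ) * (-1) ^ (k + k / d) *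
        ((n / d).choose (k / d) : ℂ) := by
    have step1 : (n : ℂ) * N = ∑ S ∈ A, if (∑ a ∈ S, a) % n = 1 % n then (n : ℂ) else 0 := by
      rw [← Finset.sum_filter, Finset.sum_const, nsmul_eq_mul, mul_comm]
    have step2 : ∀ S ∈ A, (if (∑ a ∈ S, a) % n = 1 % n then (n : ℂ) else 0)
        = ∑ z ∈ nthRootsFinset n (1 : ℂ), z ^ ((∑ a ∈ S, a) + (n - 1)) := by
      intro S _
      rw [aux_sum_nthRoots n _ hn0, if_congr (aux_mod_iff _ n npos) rfl rfl]
    rw [step1, Finset.sum_congr rfl step2, Finset.sum_comm]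
    have step3 : ∀ z ∈ nthRootsFinset n (1 : ℂ),
        (∑ S ∈ A, z ^ ((∑ a ∈ S, a) + (n - 1)))
          = z ^ (n - 1) * ∑ S ∈ A, z ^ (∑ a ∈ S, a) := by
      intro z _
      rw [Finset.mul_sum]
      exact Finset.sum_congr rfl fun S _ => by rw [pow_add]; ring
    rw [Finset.sum_congr rfl step3, IsPrimitiveRoot.nthRoots_one_eq_biUnion_primitiveRoots (n := n),
      Finset.sum_biUnion (fun i _ j _ hij => IsPrimitiveRoot.disjoint hij)]
    have inner : ∀ e ∈ n.divisors,
        (∑ z ∈ primitiveRoots e ℂ, z ^ (n - 1) * ∑ S ∈ A, z ^ (∑ a ∈ S, a))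
          = if e ∣ k then ((ArithmeticFunction.moebius e : ℤ) : ℂ) * (-1) ^ (k + k / e) *
              ((n / e).choose (k / e) : ℂ) else 0 := by
      intro e hee
      obtain ⟨hedvd, -⟩ := Nat.mem_divisors.1 hee
      have he0 : 0 < e := Nat.pos_of_dvd_of_pos hedvd npos
      have hsub : ∀ z ∈ primitiveRoots e ℂ,
          z ^ (n - 1) * (∑ S ∈ A, z ^ (∑ a ∈ S, a))
            = (if e ∣ k then (-1 : ℂ) ^ (k + k / e) * ((n / e).choose (k / e) : ℂ) else 0)
              * z ^ (e - 1) := by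
        intro z hz
        have hzp := isPrimitiveRoot_of_mem_primitiveRoots hz
        rw [hA, aux_esymm n k e npos hk hedvd hzp]
        have hpow : z ^ (n - 1) = z ^ (e - 1) := by
          have hen : e ≤ n := Nat.le_of_dvd npos hedvd
          rw [show n - 1 = (n - e) + (e - 1) by omega, pow_add,
            (hzp.pow_eq_one_iff_dvd _).2 (Nat.dvd_sub hedvd dvd_rfl), one_mul]
        rw [hpow]
        ring
      rw [Finset.sum_congr rfl hsub, ← Finset.mul_sum, aux_sum_prim_pred e he0]
      by_cases hek : e ∣ k
      · rw [if_pos hek, if_pos hek]; ring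
      · rw [if_neg hek, if_neg hek, zero_mul]
    rw [Finset.sum_congr rfl inner, ← Finset.sum_filter]
    congr 1
    ext d
    simp only [Finset.mem_filter, Nat.mem_divisors, Nat.dvd_gcd_iff]
    constructor
    · rintro ⟨⟨h1, -⟩, h2⟩
      exact ⟨⟨h1, h2⟩, fun hg => hn0 (Nat.eq_zero_of_gcd_eq_zero_left hg)⟩
    · rintro ⟨⟨h1, h2⟩, -⟩
      exact ⟨⟨h1, hn0⟩, h2⟩
  have hq : (n : ℚ) * N = ∑ d ∈ (Nat.gcd n k).divisors,
      ((ArithmeticFunction.moebius d : ℤ) : ℚ) * (-1) ^ (k + k / d) *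
        ((n / d).choose (k / d) : ℚ) := by
    have h2 : (((n : ℚ) * N : ℚ) : ℂ) = ((∑ d ∈ (Nat.gcd n k).divisors,
        ((ArithmeticFunction.moebius d : ℤ) : ℚ) * (-1) ^ (k + k / d) *
          ((n / d).choose (k / d) : ℚ) : ℚ) : ℂ) := by
      push_cast
      exact main
    exact_mod_cast h2
  rw [← hq, one_div, ← mul_assoc, inv_mul_cancel₀ (by exact_mod_cast hn0 : (n : ℚ) ≠ 0), one_mul]
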